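/- Let q = (q₁,…,qₙ) be a collision-free configuration of point masses m₁,…,mₙ > 0 with center of mass 0 that is a normalized central configuration, i.e. ∇ᵢU_n(q) + mᵢ U_n(q) qᵢ = 0 for all i = 1,…,n. Set λ' = −U_n(q)/Σₖ mₖ, Rᵢⱼ = ‖qᵢ − qⱼ‖, Sᵢⱼ = 1/Rᵢⱼ³ + λ' for i ≠ j and Sᵢᵢ = 0. Then the mutual distances satisfy the Albouy–Chenciner equations: for all 1 ≤ i < j ≤ n, Σₖ₌₁ⁿ mₖ[Sᵢₖ(Rⱼₖ² − Rᵢₖ² − Rᵢⱼ²) + Sⱼₖ(Rᵢₖ² − Rⱼₖ² − Rᵢⱼ²)] = 0. -/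

import Mathlib

open scoped BigOperators
open Matrix

/-- Apply a 2×2 real matrix to a vector in the Euclidean plane. -/
noncomputable def mApply (S : Matrix (Fin 2) (Fin 2) ℝ) (v : EuclideanSpace ℝ (Fin 2)) :
    EuclideanSpace ℝ (Fin 2) :=
  Matrix.toEuclideanLin S v

/-- The Newtonian force function `U_n(q) = ∑_{i<j} mᵢ mⱼ / ‖qⱼ - qᵢ‖`. -/
noncomputable def U {n : ℕ} (m : Fin n → ℝ) (q : Fin n → EuclideanSpace ℝ (Fin 2)) : ℝ :=
  ∑ i : Fin n, ∑ j : Fin n, if i < j then m i * m j / ‖q j - q i‖ else 0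

/-- The gradient of `U_n` with respect to the coordinates of `qᵢ`:
`∇ᵢU_n(q) = ∑_{j ≠ i} mᵢ mⱼ (qⱼ - qᵢ) / ‖qⱼ - qᵢ‖³`. -/
noncomputable def gradU {n : ℕ} (m : Fin n → ℝ) (q : Fin n → EuclideanSpace ℝ (Fin 2))
    (i : Fin n) : EuclideanSpace ℝ (Fin 2) :=
  ∑ j ∈ Finset.univ.erase i, (m i * m j / ‖q j - q i‖ ^ 3) • (q j - q i)

/-- The center of mass `c = (∑ mᵢ)⁻¹ ∑ mᵢ qᵢ`. -/
noncomputable def com {n : ℕ} (m : Fin n → ℝ) (q : Fin n → EuclideanSpace ℝ (Fin 2)) :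
    EuclideanSpace ℝ (Fin 2) :=
  (∑ i, m i)⁻¹ • ∑ i, m i • q i

/-- `q` is a balanced configuration with respect to `S` with parameter `lam`:
`∇ᵢU_n(q) + mᵢ λ S (qᵢ - c) = 0` for all `i`. -/
def IsBalanced {n : ℕ} (m : Fin n → ℝ) (q : Fin n → EuclideanSpace ℝ (Fin 2))
    (S : Matrix (Fin 2) (Fin 2) ℝ) (lam : ℝ) : Prop :=
  ∀ i, gradU m q i + (m i * lam) • mApply S (q i - com m q) = 0

/-- `q` is a central configuration with parameter `lam`:
`∇ᵢU_n(q) + mᵢ λ (qᵢ - c) = 0` for all `i`. -/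
def IsCentral {n : ℕ} (m : Fin n → ℝ) (q : Fin n → EuclideanSpace ℝ (Fin 2))
    (lam : ℝ) : Prop :=
  ∀ i, gradU m q i + (m i * lam) • (q i - com m q) = 0

/-- The `S`-weighted moment of inertia `I_S(q) = ∑ mⱼ (qⱼ - c)ᵀ S (qⱼ - c)`. -/
noncomputable def inertia {n : ℕ} (m : Fin n → ℝ) (q : Fin n → EuclideanSpace ℝ (Fin 2))
    (S : Matrix (Fin 2) (Fin 2) ℝ) : ℝ :=
  ∑ j, m j * inner (𝕜 := ℝ) (q j - com m q) (mApply S (q j - com m q))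

/-- The configuration is collision-free. -/
def CollisionFree {n : ℕ} (q : Fin n → EuclideanSpace ℝ (Fin 2)) : Prop :=
  ∀ i j, i ≠ j → q i ≠ q j

lemma key {n : ℕ} (m : Fin n → ℝ) (q : Fin n → EuclideanSpace ℝ (Fin 2))
    (hm : ∀ i, 0 < m i)
    (hcom : ∑ i, m i • q i = 0)
    (hcc : ∀ i, gradU m q i + (m i * U m q) • q i = 0)
    (lam' : ℝ) (hlam' : lam' = -U m q / ∑ k, m k)
    (R : Fin n → Fin n → ℝ) (hR : ∀ i j, R i j = ‖q i - q j‖)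
    (Sf : Fin n → Fin n → ℝ)
    (hSf : ∀ i j, Sf i j = if i = j then 0 else 1 / R i j ^ 3 + lam')
    (i : Fin n) :
    ∑ k, (m k * Sf i k) • (q i - q k) = 0 := by
  have hM : (0:ℝ) < ∑ k, m k :=
    Finset.sum_pos (fun k _ => hm k) ⟨i, Finset.mem_univ i⟩
  -- split off k = i
  rw [← Finset.add_sum_erase _ _ (Finset.mem_univ i)]
  have hii : (m i * Sf i i) • (q i - q i) = 0 := by simp
  rw [hii, zero_add]
  -- rewrite each term
  have hterm : ∀ k ∈ Finset.univ.erase i,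
      (m k * Sf i k) • (q i - q k)
        = (m k / ‖q k - q i‖ ^ 3) • (q i - q k) + lam' • (m k • (q i - q k)) := by
    intro k hk
    have hne : k ≠ i := Finset.ne_of_mem_erase hk
    rw [hSf, if_neg (Ne.symm hne), hR, norm_sub_rev, smul_smul]
    rw [← add_smul]
    congr 1
    ring
  rw [Finset.sum_congr rfl hterm, Finset.sum_add_distrib, ← Finset.smul_sum]
  -- first sum equals U • q i
  have hA : ∑ k ∈ Finset.univ.erase i, (m k / ‖q k - q i‖ ^ 3) • (q i - q k)
      = U m q • q i := by
    have h := hcc i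
    have h' : gradU m q i = -((m i * U m q) • q i) := by
      rw [eq_neg_iff_add_eq_zero]; exact h
    have hmi := (hm i).ne'
    have : (m i)⁻¹ • gradU m q i = -(U m q • q i) := by
      rw [h', smul_neg, smul_smul]
      field_simp
    rw [gradU, Finset.smul_sum] at this
    have heq : ∀ k ∈ Finset.univ.erase i,
        (m i)⁻¹ • ((m i * m k / ‖q k - q i‖ ^ 3) • (q k - q i))
          = -((m k / ‖q k - q i‖ ^ 3) • (q i - q k)) := by
      intro k _
      rw [smul_smul]
      have hs : (m i)⁻¹ * (m i * m k / ‖q k - q i‖ ^ 3) = m k / ‖q k - q i‖ ^ 3 := by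
        field_simp
      rw [hs, ← neg_sub (q k) (q i), smul_neg, neg_neg]
    rw [Finset.sum_congr rfl heq, Finset.sum_neg_distrib] at this
    have := neg_injective this
    rw [this]
  -- second sum equals (∑ m k) • q i
  have hB : ∑ k ∈ Finset.univ.erase i, m k • (q i - q k) = (∑ k, m k) • q i := by
    have h1 : ∑ k ∈ Finset.univ.erase i, m k • (q i - q k)
        = (∑ k ∈ Finset.univ.erase i, m k) • q i
          - ∑ k ∈ Finset.univ.erase i, m k • q k := by
      rw [Finset.sum_smul, ← Finset.sum_sub_distrib]
      exact Finset.sum_congr rfl fun k _ => smul_sub _ _ _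
    have h2 : ∑ k ∈ Finset.univ.erase i, m k • q k = -(m i • q i) := by
      have h := hcom
      rw [← Finset.add_sum_erase _ (fun k => m k • q k) (Finset.mem_univ i)] at h
      exact eq_neg_of_add_eq_zero_right h
    have h3 : ∑ k ∈ Finset.univ.erase i, m k = (∑ k, m k) - m i := by
      rw [Finset.sum_erase_eq_sub (Finset.mem_univ i)]
    rw [h1, h2, h3, sub_smul]
    module
  rw [hA, hB, smul_smul]
  rw [hlam']
  have : -U m q / (∑ k, m k) * (∑ k, m k) = -U m q := by
    field_simp
  rw [this, ← add_smul]
  simp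

/-- A normalized central configuration (center of mass `0`,
`∇ᵢU_n(q) + mᵢ U_n(q) qᵢ = 0`) has mutual distances `Rᵢⱼ = ‖qᵢ - qⱼ‖` satisfying the
Albouy–Chenciner equations with `λ' = -U_n(q) / ∑ mₖ`,
`Sᵢⱼ = 1/Rᵢⱼ³ + λ'` for `i ≠ j`, `Sᵢᵢ = 0`. -/
theorem albouy_chenciner {n : ℕ} (m : Fin n → ℝ)
    (q : Fin n → EuclideanSpace ℝ (Fin 2))
    (hm : ∀ i, 0 < m i) (hq : CollisionFree q)
    (hcom : ∑ i, m i • q i = 0)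
    (hcc : ∀ i, gradU m q i + (m i * U m q) • q i = 0)
    (lam' : ℝ) (hlam' : lam' = -U m q / ∑ k, m k)
    (R : Fin n → Fin n → ℝ) (hR : ∀ i j, R i j = ‖q i - q j‖)
    (Sf : Fin n → Fin n → ℝ)
    (hSf : ∀ i j, Sf i j = if i = j then 0 else 1 / R i j ^ 3 + lam') :
    ∀ i j, i < j →
      ∑ k, m k * (Sf i k * (R j k ^ 2 - R i k ^ 2 - R i j ^ 2) +
        Sf j k * (R i k ^ 2 - R j k ^ 2 - R i j ^ 2)) = 0 := by
  intro i j _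
  have hdist : ∀ a b k : Fin n, R b k ^ 2 - R a k ^ 2 - R a b ^ 2
      = -2 * inner (𝕜 := ℝ) (q a - q b) (q a - q k) := by
    intro a b k
    rw [hR, hR, hR]
    have hqbk : q b - q k = (q a - q k) - (q a - q b) := by abel
    rw [hqbk, norm_sub_sq_real, real_inner_comm]
    ring
  have hRsymm : R i j = R j i := by rw [hR, hR, norm_sub_rev]
  have h1 := key m q hm hcom hcc lam' hlam' R hR Sf hSf i
  have h2 := key m q hm hcom hcc lam' hlam' R hR Sf hSf j
  have hmain : ∑ k, m k * (Sf i k * (R j k ^ 2 - R i k ^ 2 - R i j ^ 2) +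
        Sf j k * (R i k ^ 2 - R j k ^ 2 - R i j ^ 2))
      = -2 * inner (𝕜 := ℝ) (q i - q j) (∑ k, (m k * Sf i k) • (q i - q k))
        + -2 * inner (𝕜 := ℝ) (q j - q i) (∑ k, (m k * Sf j k) • (q j - q k)) := by
    rw [inner_sum, inner_sum, Finset.mul_sum, Finset.mul_sum,
      ← Finset.sum_add_distrib]
    refine Finset.sum_congr rfl fun k _ => ?_
    rw [real_inner_smul_right, real_inner_smul_right, hdist i j k]
    have := hdist j i k
    rw [hRsymm]
    rw [this]
    ring
  rw [hmain, h1, h2, inner_zero_right, inner_zero_right]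
  ring
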